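/- arXiv:math/0312227 — 3 statements merged into one kernel-verified Lean document; each statement's English description precedes it below -/
import Mathlib

section
/- Let p be an odd prime and let u ∈ ℚ_p satisfy ‖u‖ = 1 and suppose u is not a square in ℚ_p. Let A = [[1+p, 1],[2p+p², 1+p]] and B = [[1+p, u⁻¹],[(2p+p²)·u, 1+p]], viewed as 2×2 matrices over ℚ_p. Then there is no matrix M over ℚ_p with det M = 1 and A · M = M · B; that is, A and B are not conjugate in SL(2, ℚ_p). -/
private lemma sq_of_close (p : ℕ) [Fact p.Prime] (hp : p ≠ 2) (v a : ℚ_[p]) (ha : ‖a‖ = 1)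
    (hv : ‖v‖ ≤ 1) (hclose : ‖v - a ^ 2‖ < 1) : ∃ y : ℚ_[p], y ^ 2 = v := by
  set A : ℤ_[p] := ⟨a, ha.le⟩ with hA
  set V : ℤ_[p] := ⟨v, hv⟩ with hV
  set F : Polynomial ℤ_[p] := Polynomial.X ^ 2 - Polynomial.C V with hF
  have hderiv : F.derivative = Polynomial.C 2 * Polynomial.X := by
    simp [hF, Polynomial.derivative_sub, Polynomial.derivative_X_pow]
    rw [one_add_one_eq_two, map_ofNat]
  have h2 : ‖(2 : ℤ_[p])‖ = 1 := by
    refine le_antisymm (PadicInt.norm_le_one _) ?_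
    by_contra h
    push_neg at h
    have hd := (PadicInt.norm_int_lt_one_iff_dvd (2 : ℤ)).mp (by exact_mod_cast h)
    have : p ∣ 2 := by exact_mod_cast hd
    exact hp ((Nat.prime_dvd_prime_iff_eq (Fact.out : p.Prime) Nat.prime_two).mp this)
  have hnA : ‖A‖ = 1 := by rw [PadicInt.norm_def]; exact ha
  have hnorm : ‖F.eval A‖ < ‖F.derivative.eval A‖ ^ 2 := by
    rw [hderiv]
    have h1 : ‖F.eval A‖ = ‖a ^ 2 - v‖ := by
      simp [hF, PadicInt.norm_def]
      rfl
    have h2' : ‖(Polynomial.C 2 * Polynomial.X : Polynomial ℤ_[p]).eval A‖ = 1 := by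
      simp [Polynomial.eval_mul, h2, hnA]
    rw [h1, h2', one_pow, ← norm_neg]
    simpa using hclose
  obtain ⟨z, hz, -⟩ := hensels_lemma hnorm
  refine ⟨(z : ℚ_[p]), ?_⟩
  have hz2 : z ^ 2 = V := by
    have h' := hz
    simp [hF, sub_eq_zero] at h'
    exact h'
  calc (z:ℚ_[p])^2 = ((z^2 : ℤ_[p]) : ℚ_[p]) := by push_cast; ring
  _ = v := by rw [hz2]

/-- For `p` an odd prime and `u` a non-square unit of `ℚ_p`, the stably conjugate
matrices `A = [[1+p, 1],[2p+p², 1+p]]` and `B = [[1+p, u⁻¹],[(2p+p²)u, 1+p]]` are not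
conjugate by any determinant-one matrix over `ℚ_p`. -/
theorem not_conjugate_in_SL2 (p : ℕ) [Fact p.Prime] (hp : p ≠ 2) (u : ℚ_[p])
    (hu : ‖u‖ = 1) (hsq : ¬∃ y : ℚ_[p], y ^ 2 = u) :
    ¬∃ M : Matrix (Fin 2) (Fin 2) ℚ_[p], M.det = 1 ∧
      (!![1 + (p : ℚ_[p]), 1; 2 * p + p ^ 2, 1 + p] : Matrix (Fin 2) (Fin 2) ℚ_[p]) * M =
        M * (!![1 + (p : ℚ_[p]), u⁻¹; (2 * p + p ^ 2) * u, 1 + p] :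
          Matrix (Fin 2) (Fin 2) ℚ_[p]) := by
  rintro ⟨M, hdet, hcomm⟩
  have hu0 : u ≠ 0 := by intro h; simp [h] at hu
  set c : ℚ_[p] := 2 * (p : ℚ_[p]) + (p : ℚ_[p]) ^ 2 with hc
  -- norm of c
  have hp1 : (1 : ℝ) < p := by exact_mod_cast (Fact.out : p.Prime).one_lt
  have hp0 : (0 : ℝ) < p := lt_trans one_pos hp1
  have h2n : ‖(2 : ℚ_[p])‖ = 1 := by
    refine le_antisymm (by exact_mod_cast Padic.norm_int_le_one (2 : ℤ)) ?_
    by_contra h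
    push_neg at h
    have hd := (Padic.norm_intCast_lt_one_iff (k := (2 : ℤ))).mp (by exact_mod_cast h)
    have : p ∣ 2 := by exact_mod_cast hd
    exact hp ((Nat.prime_dvd_prime_iff_eq (Fact.out : p.Prime) Nat.prime_two).mp this)
  have hpnorm : ‖(p : ℚ_[p])‖ = (p : ℝ)⁻¹ := Padic.norm_p
  have hplt : (p : ℝ)⁻¹ < 1 := by
    rw [inv_lt_one_iff₀]; right; exact hp1
  have hc_norm : ‖c‖ = (p : ℝ)⁻¹ := by
    have hfac : c = (p : ℚ_[p]) * (2 + p) := by rw [hc]; ring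
    have h2p : ‖(2 : ℚ_[p]) + p‖ = 1 := by
      rw [Padic.add_eq_max_of_ne (by rw [h2n, hpnorm]; exact (ne_of_lt hplt).symm)]
      rw [h2n, hpnorm]
      exact max_eq_left hplt.le
    rw [hfac, norm_mul, hpnorm, h2p, mul_one]
  have hc0 : c ≠ 0 := by
    intro h; rw [h, norm_zero] at hc_norm
    exact (inv_pos.mpr hp0).ne' hc_norm.symm
  -- entry equations
  set a : ℚ_[p] := M 0 0 with ha'
  set b : ℚ_[p] := M 0 1 with hb'
  have e00 := congrFun (congrFun hcomm 0) 0
  have e01 := congrFun (congrFun hcomm 0) 1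
  simp [Matrix.mul_apply, Fin.sum_univ_two] at e00 e01
  -- e00 : (1+p)*a + M 1 0 = a*(1+p) + b*(c*u) roughly
  have h10 : M 1 0 = b * (c * u) := by rw [hc]; linear_combination e00
  have h11 : M 1 1 = a * u⁻¹ := by rw [hc] at *; linear_combination e01
  rw [Matrix.det_fin_two] at hdet
  rw [h10, h11, ← ha', ← hb'] at hdet
  -- key : u = a^2 - b^2 * c * u^2
  have key : u = a ^ 2 - b ^ 2 * c * u ^ 2 := by
    field_simp at hdet
    linear_combination -hdet
  by_cases hb : b = 0
  · exact hsq ⟨a, by rw [key, hb]; ring⟩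
  -- parity facts
  have hRHS : ‖b ^ 2 * c * u ^ 2‖ = (p : ℝ) ^ (-(2 * b.valuation + 1)) := by
    rw [norm_mul, norm_mul, norm_pow, norm_pow, hu, hc_norm,
      Padic.norm_eq_zpow_neg_valuation hb]
    rw [← zpow_natCast ((p:ℝ) ^ (-b.valuation)) 2, ← zpow_mul, ← zpow_neg_one]
    rw [← zpow_add₀ (ne_of_gt hp0)]
    ring_nf
  have hinj := zpow_right_injective₀ hp0 (ne_of_gt hp1)
  have hRHS_ne_one : ‖b ^ 2 * c * u ^ 2‖ ≠ 1 := by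
    rw [hRHS]
    intro h
    have : -(2 * b.valuation + 1) = 0 := hinj (by simpa using h)
    omega
  by_cases hA : a = 0
  · have h' : ‖u‖ = ‖b ^ 2 * c * u ^ 2‖ := by
      nth_rewrite 1 [show u = -(b ^ 2 * c * u ^ 2) from by rw [hA] at key; linear_combination key]
      rw [norm_neg]
    rw [hu] at h'
    exact hRHS_ne_one h'.symm
  have hne : ‖a ^ 2‖ ≠ ‖-(b ^ 2 * c * u ^ 2)‖ := by
    rw [norm_neg, hRHS, norm_pow, Padic.norm_eq_zpow_neg_valuation hA,
      ← zpow_natCast ((p:ℝ) ^ (-a.valuation)) 2, ← zpow_mul]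
    intro h
    have := hinj h
    omega
  have hmax : ‖u‖ = max ‖a ^ 2‖ ‖-(b ^ 2 * c * u ^ 2)‖ := by
    nth_rewrite 1 [show u = a ^ 2 + -(b ^ 2 * c * u ^ 2) from by linear_combination key]
    exact Padic.add_eq_max_of_ne hne
  rw [hu] at hmax
  have hb_small : ‖b ^ 2 * c * u ^ 2‖ < 1 := by
    rcases max_cases ‖a ^ 2‖ ‖-(b ^ 2 * c * u ^ 2)‖ with ⟨h1, h2⟩ | ⟨h1, h2⟩
    · rw [h1] at hmax
      rw [norm_neg, ← hmax] at h2
      exact lt_of_le_of_ne h2 hRHS_ne_one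
    · rw [h1, norm_neg] at hmax
      exact absurd hmax.symm hRHS_ne_one
  have ha_one : ‖a‖ = 1 := by
    have h1 : ‖a ^ 2‖ = 1 := by
      rcases max_cases ‖a ^ 2‖ ‖-(b ^ 2 * c * u ^ 2)‖ with ⟨h1, h2⟩ | ⟨h1, h2⟩
      · rw [h1] at hmax; exact hmax.symm
      · rw [h1, norm_neg] at hmax; exact absurd hmax.symm hRHS_ne_one
    rw [norm_pow] at h1
    nlinarith [norm_nonneg a]
  refine hsq (sq_of_close p hp u a ha_one hu.le ?_)
  have : u - a ^ 2 = -(b ^ 2 * c * u ^ 2) := by linear_combination key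
  rw [this, norm_neg]
  exact hb_small
end

section
/- Let p be a prime and u a unit of ℤ_p. The topological Jordan decomposition of u is unique: if u = s₁ · v₁ = s₂ · v₂ where s₁^(p-1) = 1, s₂^(p-1) = 1, and the sequences n ↦ v₁^(p^n) and n ↦ v₂^(p^n) both converge to 1 in ℤ_p, then s₁ = s₂ and v₁ = v₂. In fact each sᵢ necessarily equals lim_{n→∞} u^(p^n). -/
open Filter

lemma pow_p_pow_eq_self {p : ℕ} [Fact p.Prime] {s : ℤ_[p]} (hs : s ^ (p - 1) = 1)
    (n : ℕ) : s ^ p ^ n = s := by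
  have hp : 1 ≤ p := (Fact.out : p.Prime).one_lt.le
  have hd : (p - 1) ∣ p ^ n - 1 := by
    simpa using Nat.sub_dvd_pow_sub_pow p 1 n
  obtain ⟨k, hk⟩ := hd
  have h1 : 1 ≤ p ^ n := Nat.one_le_pow _ _ (Fact.out : p.Prime).pos
  have : p ^ n = (p - 1) * k + 1 := by omega
  rw [this, pow_add, pow_mul, hs, one_pow, one_mul, pow_one]

/-- Uniqueness of the topological Jordan decomposition of a unit `u` of `ℤ_p`:
if `u = s₁v₁ = s₂v₂` with `sᵢ^(p-1) = 1` and `vᵢ` topologically unipotent, then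
`s₁ = s₂`, `v₁ = v₂`, and `s₁ = lim u^(p^n)`. -/
theorem topological_jordan_decomposition_unique (p : ℕ) [Fact p.Prime] (u : ℤ_[p])
    (hu : ‖u‖ = 1) (s₁ v₁ s₂ v₂ : ℤ_[p])
    (h₁ : u = s₁ * v₁) (h₂ : u = s₂ * v₂)
    (hs₁ : s₁ ^ (p - 1) = 1) (hs₂ : s₂ ^ (p - 1) = 1)
    (hv₁ : Tendsto (fun n : ℕ => v₁ ^ p ^ n) atTop (nhds 1))
    (hv₂ : Tendsto (fun n : ℕ => v₂ ^ p ^ n) atTop (nhds 1)) :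
    s₁ = s₂ ∧ v₁ = v₂ ∧ Tendsto (fun n : ℕ => u ^ p ^ n) atTop (nhds s₁) := by
  have key : ∀ s v : ℤ_[p], u = s * v → s ^ (p - 1) = 1 →
      Tendsto (fun n : ℕ => v ^ p ^ n) atTop (nhds 1) →
      Tendsto (fun n : ℕ => u ^ p ^ n) atTop (nhds s) := by
    intro s v h hs hv
    have : (fun n : ℕ => u ^ p ^ n) = fun n : ℕ => s * v ^ p ^ n := by
      funext n
      rw [h, mul_pow, pow_p_pow_eq_self hs]
    rw [this]
    simpa using (tendsto_const_nhds (x := s)).mul hv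
  have t₁ := key s₁ v₁ h₁ hs₁ hv₁
  have t₂ := key s₂ v₂ h₂ hs₂ hv₂
  have hss : s₁ = s₂ := tendsto_nhds_unique t₁ t₂
  refine ⟨hss, ?_, t₁⟩
  have hs0 : s₁ ≠ 0 := by
    intro h0
    rw [h0, zero_pow (by have := (Fact.out : p.Prime).two_le; omega)] at hs₁
    exact zero_ne_one hs₁
  apply mul_left_cancel₀ hs0
  rw [← h₁, hss]; exact h₂
end

section
/- Let p be a prime and n a positive natural number, and let K = GL(n, ℤ_p) be the subgroup of GL(n, ℚ_p) consisting of invertible matrices M such that M and M⁻¹ both have all entries of norm at most 1. If K' is a compact subgroup of GL(n, ℚ_p) with K ⊆ K', then K' = K; that is, GL(n, ℤ_p) is a maximal compact subgroup of GL(n, ℚ_p). -/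
open Matrix

/-- `GL(n, ℤ_p)` — the subgroup of `GL(n, ℚ_p)` of matrices `M` such that `M` and `M⁻¹`
have all entries of norm at most `1` — is a maximal compact subgroup of `GL(n, ℚ_p)`:
any compact subgroup containing it equals it. -/
theorem glZp_maximal_compact (p : ℕ) [Fact p.Prime] (n : ℕ) (hn : 0 < n)
    (K : Subgroup (GL (Fin n) ℚ_[p]))
    (hK : ∀ M : GL (Fin n) ℚ_[p], M ∈ K ↔
      (∀ i j, ‖(M : Matrix (Fin n) (Fin n) ℚ_[p]) i j‖ ≤ 1) ∧
      (∀ i j, ‖((M⁻¹ : GL (Fin n) ℚ_[p]) : Matrix (Fin n) (Fin n) ℚ_[p]) i j‖ ≤ 1))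
    (K' : Subgroup (GL (Fin n) ℚ_[p])) (hK' : IsCompact (K' : Set (GL (Fin n) ℚ_[p])))
    (hle : K ≤ K') : K' = K := by
  refine le_antisymm ?_ hle
  suffices key : ∀ N : GL (Fin n) ℚ_[p], N ∈ K' →
      ∀ i j, ‖(N : Matrix (Fin n) (Fin n) ℚ_[p]) i j‖ ≤ 1 by
    intro M hM
    exact (hK M).2 ⟨key M hM, key M⁻¹ (K'.inv_mem hM)⟩
  by_contra hcon
  push_neg at hcon
  obtain ⟨M, hM, i0, j0, hbig⟩ := hcon
  haveI : Nonempty (Fin n) := ⟨⟨0, hn⟩⟩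
  set A : Matrix (Fin n) (Fin n) ℚ_[p] := (M : Matrix (Fin n) (Fin n) ℚ_[p]) with hAdef
  obtain ⟨⟨i1, j1⟩, -, hmax⟩ := Finset.exists_max_image (Finset.univ : Finset (Fin n × Fin n))
    (fun q => ‖A q.1 q.2‖) ⟨(i0, j0), Finset.mem_univ _⟩
  set a : ℚ_[p] := A i1 j1 with hadef
  have hmax' : ∀ i j, ‖A i j‖ ≤ ‖a‖ := fun i j => hmax (i, j) (Finset.mem_univ _)
  have h1a : (1 : ℝ) < ‖a‖ := lt_of_lt_of_le hbig (hmax' i0 j0)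
  have hapos : (0 : ℝ) < ‖a‖ := lt_trans one_pos h1a
  have ha0 : a ≠ 0 := norm_pos_iff.mp hapos
  -- the unipotent matrix clearing row i1
  set Y : Matrix (Fin n) (Fin n) ℚ_[p] :=
    Matrix.of (fun i j => if i = j1 ∧ j ≠ j1 then -(A i1 j) / a else 0) with hYdef
  have hYapply : ∀ i j, Y i j = if i = j1 ∧ j ≠ j1 then -(A i1 j) / a else 0 := fun i j => rfl
  have hYle : ∀ i j, ‖Y i j‖ ≤ 1 := by
    intro i j
    rw [hYapply]
    split
    · rw [norm_div, norm_neg, div_le_one hapos]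
      exact hmax' i1 j
    · simp
  have hYsq : Y * Y = 0 := by
    ext i j
    rw [Matrix.mul_apply, Matrix.zero_apply]
    apply Finset.sum_eq_zero
    intro l _
    rcases eq_or_ne l j1 with h | h
    · rw [hYapply i l]
      simp [h]
    · rw [hYapply l j]
      simp [h]
  have hRmul1 : (1 + Y) * (1 - Y) = 1 := by
    have : (1 + Y) * (1 - Y) = 1 - Y * Y := by noncomm_ring
    rw [this, hYsq, sub_zero]
  have hRmul2 : (1 - Y) * (1 + Y) = 1 := by
    have : (1 - Y) * (1 + Y) = 1 - Y * Y := by noncomm_ring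
    rw [this, hYsq, sub_zero]
  set Ru : GL (Fin n) ℚ_[p] := ⟨1 + Y, 1 - Y, hRmul1, hRmul2⟩ with hRudef
  have hRuK : Ru ∈ K := by
    rw [hK]
    constructor
    · intro i j
      show ‖(1 + Y) i j‖ ≤ 1
      rw [Matrix.add_apply]
      refine le_trans (Padic.nonarchimedean _ _) (max_le ?_ (hYle i j))
      rw [Matrix.one_apply]
      split <;> simp
    · intro i j
      show ‖(1 - Y) i j‖ ≤ 1
      rw [Matrix.sub_apply]
      rw [sub_eq_add_neg]
      refine le_trans (Padic.nonarchimedean _ _) (max_le ?_ ?_)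
      · rw [Matrix.one_apply]; split <;> simp
      · rw [norm_neg]; exact hYle i j
  -- transposition matrix
  set T : Matrix (Fin n) (Fin n) ℚ_[p] :=
    Matrix.of (fun i j => if Equiv.swap i1 j1 i = j then 1 else 0) with hTdef
  have hTapply : ∀ i j, T i j = if Equiv.swap i1 j1 i = j then 1 else 0 := fun i j => rfl
  have hTT : T * T = 1 := by
    ext i j
    rw [Matrix.mul_apply]
    have h1 : ∀ l, T i l * T l j = if Equiv.swap i1 j1 i = l then T l j else 0 := by
      intro l
      rw [hTapply i l, ite_mul, one_mul, zero_mul]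
    rw [Finset.sum_congr rfl (fun l _ => h1 l), Finset.sum_ite_eq]
    simp [hTapply, Equiv.swap_apply_self, Matrix.one_apply, eq_comm]
  set Tu : GL (Fin n) ℚ_[p] := ⟨T, T, hTT, hTT⟩ with hTudef
  have hTle : ∀ i j, ‖T i j‖ ≤ 1 := by
    intro i j
    rw [hTapply]
    split <;> simp
  have hTuK : Tu ∈ K := by
    rw [hK]
    exact ⟨hTle, hTle⟩
  set Nu : GL (Fin n) ℚ_[p] := M * Ru * Tu with hNudef
  have hNuK' : Nu ∈ K' := mul_mem (mul_mem hM (hle hRuK)) (hle hTuK)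
  -- row i1 of A * (1 + Y)
  have hMR : ∀ j, (A * (1 + Y)) i1 j = if j = j1 then a else 0 := by
    intro j
    rw [mul_add, mul_one, Matrix.add_apply]
    have hAY : (A * Y) i1 j = A i1 j1 * Y j1 j := by
      rw [Matrix.mul_apply]
      apply Finset.sum_eq_single j1
      · intro l _ hl
        rw [hYapply l j]
        simp [hl]
      · simp
    rw [hAY]
    rcases eq_or_ne j j1 with h | h
    · subst h
      rw [hYapply]
      simp [hadef]
    · rw [hYapply]
      simp only [h, ne_eq, not_false_iff, and_true, if_true, if_false]
      have e : A i1 j1 * (-A i1 j / a) = -A i1 j := by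
        rw [← hadef, mul_comm, div_mul_cancel₀ _ ha0]
      rw [e, add_neg_cancel]
  have hrow : ∀ j, (Nu : Matrix (Fin n) (Fin n) ℚ_[p]) i1 j = if j = i1 then a else 0 := by
    intro j
    have hval : (Nu : Matrix (Fin n) (Fin n) ℚ_[p]) = A * (1 + Y) * T := rfl
    rw [hval, Matrix.mul_apply]
    have h1 : ∀ l, (A * (1 + Y)) i1 l * T l j = if l = j1 then a * T l j else 0 := by
      intro l
      rw [hMR l, ite_mul, zero_mul]
    rw [Finset.sum_congr rfl (fun l _ => h1 l), Finset.sum_ite_eq']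
    simp only [Finset.mem_univ, if_true, hTapply, Equiv.swap_apply_right]
    rcases eq_or_ne j i1 with h | h
    · simp [h]
    · simp [h, Ne.symm h]
  have hpow : ∀ m : ℕ, ((Nu ^ m : GL (Fin n) ℚ_[p]) : Matrix (Fin n) (Fin n) ℚ_[p]) i1 i1
      = a ^ m := by
    intro m
    induction m with
    | zero => simp [Matrix.one_apply]
    | succ m ih =>
      have h1 : ((Nu ^ (m + 1) : GL (Fin n) ℚ_[p]) : Matrix (Fin n) (Fin n) ℚ_[p])
          = (Nu : Matrix (Fin n) (Fin n) ℚ_[p])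
            * ((Nu ^ m : GL (Fin n) ℚ_[p]) : Matrix (Fin n) (Fin n) ℚ_[p]) := by
        rw [pow_succ']
        rfl
      rw [h1, Matrix.mul_apply]
      have h2 : ∀ l, (Nu : Matrix (Fin n) (Fin n) ℚ_[p]) i1 l
          * ((Nu ^ m : GL (Fin n) ℚ_[p]) : Matrix (Fin n) (Fin n) ℚ_[p]) l i1
          = if l = i1 then a * ((Nu ^ m : GL (Fin n) ℚ_[p]) : Matrix (Fin n) (Fin n) ℚ_[p]) l i1
            else 0 := by
        intro l
        rw [hrow l, ite_mul, zero_mul]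
      rw [Finset.sum_congr rfl (fun l _ => h2 l), Finset.sum_ite_eq']
      simp only [Finset.mem_univ, if_true, ih]
      rw [pow_succ']
  -- compactness bound
  have hcont : Continuous (fun x : GL (Fin n) ℚ_[p] =>
      ‖(x : Matrix (Fin n) (Fin n) ℚ_[p]) i1 i1‖) := by
    have h1 : Continuous (fun x : GL (Fin n) ℚ_[p] => (x : Matrix (Fin n) (Fin n) ℚ_[p])) :=
      Units.continuous_val
    exact continuous_norm.comp ((continuous_apply i1).comp ((continuous_apply i1).comp h1))
  obtain ⟨M₀, hM₀, hbound⟩ := hK'.exists_isMaxOn ⟨1, K'.one_mem⟩ hcont.continuousOn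
  obtain ⟨m, hm⟩ := pow_unbounded_of_one_lt
    (‖(M₀ : Matrix (Fin n) (Fin n) ℚ_[p]) i1 i1‖) h1a
  have hb : ‖((Nu ^ m : GL (Fin n) ℚ_[p]) : Matrix (Fin n) (Fin n) ℚ_[p]) i1 i1‖
      ≤ ‖(M₀ : Matrix (Fin n) (Fin n) ℚ_[p]) i1 i1‖ := hbound (pow_mem hNuK' m)
  rw [hpow m, norm_pow] at hb
  linarith
end
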